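/- For positive integers n, k, ℓ and q₁,…,q_k: ∑ over a₁,…,a_k in 1..n with each gcd(a_i,n)=1 and b₁,…,b_ℓ in 1..n of gcd(a₁^{q₁}-1, …, a_k^{q_k}-1, b₁, …, b_ℓ, n) equals φ(n)^k · (id_ℓ ∗ H_k)(n), where H_k(n) = φ(n)^{1-k} · ∏_{i=1}^{k} C^{(q_i)}(n) and C^{(q)}(n) is the number of x mod n with x^q ≡ 1 (mod n). -/

import Mathlib

open Finset Function

lemma fiber_card_eq {G H : Type*} [Group G] [Group H] [Fintype G] [DecidableEq H]
    (f : G →* H) (b : H) (hb : ∃ x, f x = b) :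
    (Finset.univ.filter fun x => f x = b).card
      = (Finset.univ.filter fun x => f x = 1).card := by
  obtain ⟨x₀, hx₀⟩ := hb
  apply Finset.card_bij' (fun x _ => x₀⁻¹ * x) (fun y _ => x₀ * y)
  · intro a ha; simp_all [mul_assoc]
  · intro a ha; simp_all
  · intro a ha; group
  · intro a ha; group

lemma surj_count {G H : Type*} [Group G] [Group H] [Fintype G] [Fintype H] [DecidableEq H]
    (f : G →* H) (hf : Surjective f) (p : H → Prop) [DecidablePred p] :
    (Finset.univ.filter fun x => p (f x)).card * Fintype.card H
      = Fintype.card G * (Finset.univ.filter p).card := by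
  set K := (Finset.univ.filter fun x => f x = 1).card with hK
  have h1 : ∀ (s : Finset H), (Finset.univ.filter fun x => f x ∈ s).card = s.card * K := by
    intro s
    rw [Finset.card_eq_sum_card_fiberwise (f := f) (t := s) (by intro x hx; simpa using hx)]
    rw [Finset.sum_congr rfl (fun b hb => ?_), Finset.sum_const, smul_eq_mul]
    rw [Finset.filter_filter]
    rw [show (Finset.univ.filter fun x => f x ∈ s ∧ f x = b) = Finset.univ.filter fun x => f x = b by
      ext x; simp (config := {contextual := true}) [Finset.mem_filter]; intro h; simp_all]
    exact fiber_card_eq f b (hf b)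
  have h2 := h1 Finset.univ
  simp only [Finset.mem_univ, Finset.filter_true, Finset.card_univ] at h2
  have h3 := h1 (Finset.univ.filter p)
  simp only [Finset.mem_filter, Finset.mem_univ, true_and] at h3
  rw [h3, h2]; ring

-- Icc 1 n → range n for residue-invariant predicates
lemma Icc_range_card (n : ℕ) (hn : 0 < n) (P : ℕ → Prop) [DecidablePred P]
    (hP : ∀ a, P (a % n) ↔ P a) :
    ((Finset.Icc 1 n).filter P).card = ((Finset.range n).filter P).card := by
  apply Finset.card_bij' (fun a _ => a % n) (fun r _ => if r = 0 then n else r)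
  · intro a ha
    simp only [Finset.mem_filter, Finset.mem_Icc, Finset.mem_range] at ha ⊢
    exact ⟨Nat.mod_lt _ hn, (hP a).mpr ha.2⟩
  · intro r hr
    simp only [Finset.mem_filter, Finset.mem_range] at hr
    by_cases h : r = 0
    · subst h
      simp only [if_pos rfl, Finset.mem_filter, Finset.mem_Icc]
      have := hP n
      simp only [Nat.mod_self] at this
      exact ⟨⟨hn, le_refl n⟩, this.mp hr.2⟩
    · simp only [if_neg h, Finset.mem_filter, Finset.mem_Icc]
      exact ⟨⟨by omega, by omega⟩, hr.2⟩
  · intro a ha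
    simp only [Finset.mem_filter, Finset.mem_Icc] at ha
    by_cases h : a % n = 0
    · have han : a = n := by
        rcases (Nat.dvd_of_mod_eq_zero h) with ⟨c, rfl⟩
        have : c = 1 := by nlinarith [ha.1.1, ha.1.2]
        simp [this]
      simp [h, han]
    · simp only [if_neg h]
      have : a < n ∨ a = n := by omega
      rcases this with h'|h'
      · exact Nat.mod_eq_of_lt h'
      · simp [h'] at h
  · intro r hr
    simp only [Finset.mem_filter, Finset.mem_range] at hr
    by_cases h : r = 0
    · simp [h, Nat.mod_self]
    · simp [h, Nat.mod_eq_of_lt hr.1]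

-- range n coprime filter ↔ units filter
lemma range_units_card (n : ℕ) [NeZero n] (Q : ZMod n → Prop) [DecidablePred Q] :
    ((Finset.range n).filter (fun x => Nat.gcd x n = 1 ∧ Q (x : ZMod n))).card
      = (Finset.univ.filter (fun u : (ZMod n)ˣ => Q (u : ZMod n))).card := by
  apply Finset.card_bij (fun x hx => ZMod.unitOfCoprime x (by
    simp only [Finset.mem_filter] at hx; exact hx.2.1))
  · intro x hx
    simp only [Finset.mem_filter, Finset.mem_univ, true_and] at hx ⊢
    rw [ZMod.coe_unitOfCoprime]; exact hx.2.2
  · intro x hx y hy h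
    simp only [Finset.mem_filter, Finset.mem_range] at hx hy
    have := congrArg (fun u : (ZMod n)ˣ => ZMod.val (u : ZMod n)) h
    simpa [ZMod.coe_unitOfCoprime, ZMod.val_cast_of_lt hx.1, ZMod.val_cast_of_lt hy.1] using this
  · intro u hu
    simp only [Finset.mem_filter, Finset.mem_univ, true_and] at hu
    refine ⟨(u : ZMod n).val, ?_, ?_⟩
    · simp only [Finset.mem_filter, Finset.mem_range]
      refine ⟨ZMod.val_lt _, ZMod.val_coe_unit_coprime u, ?_⟩
      rw [ZMod.natCast_val, ZMod.cast_id]; exact hu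
    · apply Units.ext
      rw [ZMod.coe_unitOfCoprime, ZMod.natCast_val, ZMod.cast_id]

lemma count_pow (n d m : ℕ) (hd : d ∣ n) (hn : 0 < n) (hm : 0 < m) :
    ((Finset.Icc 1 n).filter (fun a => Nat.gcd a n = 1 ∧ d ∣ a ^ m - 1)).card * d.totient
      = n.totient * ((Finset.range d).filter (fun x => x ^ m % d = 1 % d)).card := by
  have hd0 : 0 < d := Nat.pos_of_dvd_of_pos hd hn
  haveI : NeZero n := ⟨hn.ne'⟩
  haveI : NeZero d := ⟨hd0.ne'⟩
  have key : ∀ x : ℕ, ((x : ZMod d))^m = 1 ↔ x^m % d = 1 % d := by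
    intro x
    have h1 : ((x : ZMod d))^m = ((x^m : ℕ) : ZMod d) := by push_cast; ring
    rw [h1, show (1 : ZMod d) = ((1:ℕ) : ZMod d) by norm_cast, ZMod.natCast_eq_natCast_iff']
  -- step 1: dvd → mod
  have e1 : (Finset.Icc 1 n).filter (fun a => Nat.gcd a n = 1 ∧ d ∣ a ^ m - 1)
      = (Finset.Icc 1 n).filter (fun a => Nat.gcd a n = 1 ∧ a ^ m % d = 1 % d) := by
    apply Finset.filter_congr
    intro a ha
    simp only [Finset.mem_Icc] at ha
    have h1 : 1 ≤ a ^ m := Nat.one_le_pow _ _ (by omega)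
    rw [← Nat.modEq_iff_dvd' h1]
    constructor
    · rintro ⟨h2, h3⟩; exact ⟨h2, h3.symm⟩
    · rintro ⟨h2, h3⟩; exact ⟨h2, h3.symm⟩
  rw [e1]
  -- step 2: Icc → range n
  rw [Icc_range_card n hn _ (fun a => ?_)]
  swap
  · have hg : Nat.gcd (a % n) n = Nat.gcd a n := by
      rw [Nat.gcd_comm a n, ← Nat.gcd_rec]
    have hp : (a % n)^m % d = a^m % d := Nat.ModEq.pow m ((Nat.mod_modEq a n).of_dvd hd)
    rw [hg, hp]
  -- step 3: rewrite condition via ZMod n and units of ZMod n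
  have e2 : ((Finset.range n).filter (fun a => Nat.gcd a n = 1 ∧ a ^ m % d = 1 % d))
      = ((Finset.range n).filter (fun a => Nat.gcd a n = 1 ∧
          ((ZMod.castHom hd (ZMod d)) ((a : ℕ) : ZMod n))^m = 1)) := by
    apply Finset.filter_congr
    intro a _
    rw [map_natCast, key]
  rw [e2, range_units_card n (fun z => ((ZMod.castHom hd (ZMod d)) z)^m = 1)]
  -- step 4: apply surjective counting
  have e3 : (Finset.univ.filter (fun u : (ZMod n)ˣ => ((ZMod.castHom hd (ZMod d)) (u : ZMod n))^m = 1))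
      = (Finset.univ.filter (fun u : (ZMod n)ˣ =>
          ((ZMod.unitsMap hd u : (ZMod d)ˣ) : ZMod d)^m = 1)) := by
    apply Finset.filter_congr
    intro u _
    rw [ZMod.unitsMap_def, Units.coe_map]
    rfl
  rw [e3]
  have e4 := surj_count (ZMod.unitsMap hd) (ZMod.unitsMap_surjective hd)
      (fun h : (ZMod d)ˣ => ((h : ZMod d))^m = 1)
  rw [ZMod.card_units_eq_totient, ZMod.card_units_eq_totient] at e4
  rw [e4]
  -- step 5: units solutions side
  congr 1
  rw [← range_units_card d (fun z => z^m = 1)]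
  congr 1
  apply Finset.filter_congr
  intro x _
  rw [← key x]
  constructor
  · exact And.right
  · intro h
    exact ⟨(ZMod.isUnit_iff_coprime x d).mp (IsUnit.of_pow_eq_one h hm.ne'), h⟩

lemma gcd_eq_sum_totient (n x : ℕ) (hn : 0 < n) :
    Nat.gcd x n = ∑ e ∈ n.divisors, if e ∣ x then e.totient else 0 := by
  have h1 : (Nat.gcd x n).divisors = n.divisors.filter (· ∣ x) := by
    ext e
    simp only [Nat.mem_divisors, Nat.dvd_gcd_iff, Finset.mem_filter]
    constructor
    · rintro ⟨⟨h1, h2⟩, -⟩; exact ⟨⟨h2, hn.ne'⟩, h1⟩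
    · rintro ⟨⟨h2, -⟩, h1⟩
      exact ⟨⟨h1, h2⟩, Nat.gcd_ne_zero_right hn.ne'⟩
  calc Nat.gcd x n = ∑ e ∈ (Nat.gcd x n).divisors, e.totient := (Nat.sum_totient _).symm
    _ = _ := by rw [h1, Finset.sum_filter]

lemma card_Icc_dvd (n d : ℕ) : ((Finset.Icc 1 n).filter (fun b => d ∣ b)).card = n / d := by
  have : Finset.Icc 1 n = Finset.Ioc 0 n := by ext a; simp [Nat.lt_iff_add_one_le]
  rw [this, Nat.Ioc_filter_dvd_card_eq_div]

theorem menon_type_identity_powers (n k ℓ : ℕ) (hn : 0 < n) (hk : 0 < k)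
    (q : Fin k → ℕ) (hq : ∀ i, 0 < q i) :
    (∑ a ∈ Fintype.piFinset
        (fun _ : Fin k => (Finset.Icc 1 n).filter (fun a => Nat.gcd a n = 1)),
      ∑ b ∈ Fintype.piFinset (fun _ : Fin ℓ => Finset.Icc 1 n),
        (Nat.gcd (Finset.univ.gcd (fun i => (a i) ^ (q i) - 1))
          (Nat.gcd (Finset.univ.gcd b) n) : ℚ))
      = (n.totient : ℚ) ^ k *
        ∑ d ∈ n.divisors, (d : ℚ) ^ ℓ *
          (((n / d : ℕ).totient : ℚ) ^ ((1 : ℤ) - (k : ℤ)) *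
            ∏ i : Fin k,
              (((Finset.range (n / d)).filter
                (fun x => x ^ (q i) % (n / d) = 1 % (n / d))).card : ℚ)) := by
  classical
  have hgcd : ∀ x : ℕ, ((Nat.gcd x n : ℕ) : ℚ)
      = ∑ e ∈ n.divisors, if e ∣ x then (e.totient : ℚ) else 0 := by
    intro x
    rw [gcd_eq_sum_totient n x hn, Nat.cast_sum]
    exact Finset.sum_congr rfl fun e _ => by split_ifs <;> simp
  -- step 1: expand each gcd
  have step1 : ∀ (a : Fin k → ℕ) (b : Fin ℓ → ℕ),
      (Nat.gcd (Finset.univ.gcd (fun i => (a i) ^ (q i) - 1))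
        (Nat.gcd (Finset.univ.gcd b) n) : ℚ)
      = ∑ e ∈ n.divisors,
          if (∀ i, e ∣ (a i) ^ (q i) - 1) ∧ (∀ j, e ∣ b j) then (e.totient : ℚ) else 0 := by
    intro a b
    rw [← Nat.gcd_assoc, hgcd]
    refine Finset.sum_congr rfl fun e _ => ?_
    refine if_congr ?_ rfl rfl
    rw [Nat.dvd_gcd_iff, Finset.dvd_gcd_iff, Finset.dvd_gcd_iff]
    simp
  simp only [step1]
  -- step 2: swap sums
  rw [Finset.sum_congr rfl fun a _ => Finset.sum_comm, Finset.sum_comm]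
  -- step 3: compute each inner double sum
  have step3 : ∀ e ∈ n.divisors,
      (∑ a ∈ Fintype.piFinset
          (fun _ : Fin k => (Finset.Icc 1 n).filter (fun a => Nat.gcd a n = 1)),
        ∑ b ∈ Fintype.piFinset (fun _ : Fin ℓ => Finset.Icc 1 n),
          if (∀ i, e ∣ (a i) ^ (q i) - 1) ∧ (∀ j, e ∣ b j) then (e.totient : ℚ) else 0)
      = (e.totient : ℚ) *
          (∏ i : Fin k,
            ((((Finset.Icc 1 n).filter (fun a => Nat.gcd a n = 1)).filter
              (fun x => e ∣ x ^ (q i) - 1)).card : ℚ)) *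
          (((n / e : ℕ) : ℚ)) ^ ℓ := by
    intro e _
    have hsplit : ∀ (a : Fin k → ℕ) (b : Fin ℓ → ℕ),
        (if (∀ i, e ∣ (a i) ^ (q i) - 1) ∧ (∀ j, e ∣ b j) then (e.totient : ℚ) else 0)
        = ((e.totient : ℚ) * ∏ i : Fin k, if e ∣ (a i) ^ (q i) - 1 then (1:ℚ) else 0)
          * (∏ j : Fin ℓ, if e ∣ b j then (1:ℚ) else 0) := by
      intro a b
      rw [Finset.prod_boole, Finset.prod_boole]
      by_cases h1 : ∀ i, e ∣ (a i) ^ (q i) - 1 <;>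
        by_cases h2 : ∀ j, e ∣ b j <;> simp [h1, h2]
    simp only [hsplit]
    rw [← Finset.sum_mul_sum, ← Finset.mul_sum,
      ← Finset.prod_univ_sum (fun _ : Fin k => (Finset.Icc 1 n).filter (fun a => Nat.gcd a n = 1))
        (fun i y => if e ∣ y ^ q i - 1 then (1:ℚ) else 0),
      ← Finset.prod_univ_sum (fun _ : Fin ℓ => Finset.Icc 1 n)
        (fun _ y => if e ∣ y then (1:ℚ) else 0)]
    simp only [Finset.sum_boole]
    rw [Finset.prod_const, Finset.card_univ, Fintype.card_fin, card_Icc_dvd]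
  rw [Finset.sum_congr rfl step3]
  -- step 4: reindex RHS by d ↦ n / d
  rw [Finset.mul_sum]
  have step4 : ∑ d ∈ n.divisors,
      (n.totient : ℚ) ^ k * ((d : ℚ) ^ ℓ *
        (((n / d : ℕ).totient : ℚ) ^ ((1 : ℤ) - (k : ℤ)) *
          ∏ i : Fin k,
            (((Finset.range (n / d)).filter
              (fun x => x ^ (q i) % (n / d) = 1 % (n / d))).card : ℚ)))
      = ∑ d ∈ n.divisors,
        (fun e => (n.totient : ℚ) ^ k * (((n / e : ℕ) : ℚ) ^ ℓ *
          ((e.totient : ℚ) ^ ((1 : ℤ) - (k : ℤ)) *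
            ∏ i : Fin k,
              (((Finset.range e).filter
                (fun x => x ^ (q i) % e = 1 % e)).card : ℚ)))) (n / d) := by
    refine Finset.sum_congr rfl fun d hd => ?_
    obtain ⟨hdvd, -⟩ := Nat.mem_divisors.mp hd
    simp only
    rw [Nat.div_div_self hdvd hn.ne']
  rw [step4, Nat.sum_div_divisors n
    (fun e => (n.totient : ℚ) ^ k * (((n / e : ℕ) : ℚ) ^ ℓ *
      ((e.totient : ℚ) ^ ((1 : ℤ) - (k : ℤ)) *
        ∏ i : Fin k,
          (((Finset.range e).filter
            (fun x => x ^ (q i) % e = 1 % e)).card : ℚ))))]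
  -- step 5: per-divisor identity
  refine Finset.sum_congr rfl fun e he => ?_
  obtain ⟨hdvd, -⟩ := Nat.mem_divisors.mp he
  have he0 : 0 < e := Nat.pos_of_dvd_of_pos hdvd hn
  have ht : (e.totient : ℚ) ≠ 0 := by
    exact_mod_cast (Nat.totient_pos.mpr he0).ne'
  have hA : ∀ i : Fin k,
      (((((Finset.Icc 1 n).filter (fun a => Nat.gcd a n = 1)).filter
        (fun x => e ∣ x ^ (q i) - 1)).card : ℚ))
      = (n.totient : ℚ) *
        (((Finset.range e).filter (fun x => x ^ (q i) % e = 1 % e)).card : ℚ)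
          / (e.totient : ℚ) := by
    intro i
    have hc := count_pow n e (q i) hdvd hn (hq i)
    rw [Finset.filter_filter]
    field_simp
    exact_mod_cast hc
  rw [Finset.prod_congr rfl (fun i _ => hA i), Finset.prod_div_distrib,
    Finset.prod_mul_distrib, Finset.prod_const, Finset.prod_const,
    Finset.card_univ, Fintype.card_fin]
  have hz : (e.totient : ℚ) ^ ((1 : ℤ) - (k : ℤ))
      = (e.totient : ℚ) / (e.totient : ℚ) ^ k := by
    rw [zpow_sub₀ ht, zpow_one, zpow_natCast]
  rw [hz]
  ring
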